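/- If D ⊆ ℕ is bounded truth-table reducible to K, then there exists a natural number n such that D is weakly n-c.e. -/

import Mathlib

/-- Codes for oracle Turing machines (partial recursive functions relative to an oracle). -/
inductive OCode : Type
  | zero : OCode
  | succ : OCode
  | left : OCode
  | right : OCode
  | oracle : OCode
  | pair : OCode → OCode → OCode
  | comp : OCode → OCode → OCode
  | prec : OCode → OCode → OCode
  | rfind' : OCode → OCode

namespace OCode

/-- A standard enumeration of oracle machine codes. -/
def ofNat : ℕ → OCode
  | 0 => zero
  | 1 => succ
  | 2 => left
  | 3 => right
  | 4 => oracle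
  | n + 5 =>
    let m := n.div2.div2
    have hm : m < n + 5 := by
      simp only [m, Nat.div2_val]
      exact
        lt_of_le_of_lt (le_trans (Nat.div_le_self _ _) (Nat.div_le_self _ _))
          (Nat.lt_succ_of_le (Nat.le_add_right _ _))
    have _m1 : m.unpair.1 < n + 5 := lt_of_le_of_lt m.unpair_left_le hm
    have _m2 : m.unpair.2 < n + 5 := lt_of_le_of_lt m.unpair_right_le hm
    match n.bodd, n.div2.bodd with
    | false, false => pair (ofNat m.unpair.1) (ofNat m.unpair.2)
    | false, true  => comp (ofNat m.unpair.1) (ofNat m.unpair.2)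
    | true , false => prec (ofNat m.unpair.1) (ofNat m.unpair.2)
    | true , true  => rfind' (ofNat m)
  decreasing_by
    all_goals
      first
      | exact Nat.le_of_lt_succ _m1
      | exact Nat.le_of_lt_succ _m2
      | exact Nat.le_of_lt_succ hm
      | exact _m1
      | exact _m2
      | exact hm

/-- Evaluation of an oracle machine code relative to an oracle `g`. -/
def eval (g : ℕ →. ℕ) : OCode → ℕ →. ℕ
  | zero => pure 0
  | succ => Nat.succ
  | left => ↑fun n : ℕ => n.unpair.1
  | right => ↑fun n : ℕ => n.unpair.2
  | oracle => g
  | pair cf cg => fun n => Nat.pair <$> eval g cf n <*> eval g cg n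
  | comp cf cg => fun n => eval g cg n >>= eval g cf
  | prec cf cg =>
    Nat.unpaired fun a n =>
      n.rec (eval g cf a) fun y IH => do
        let i ← IH
        eval g cg (Nat.pair a (Nat.pair y i))
  | rfind' cf =>
    Nat.unpaired fun a m =>
      (Nat.rfind fun n => (fun m => m = 0) <$> eval g cf (Nat.pair a (n + m))).map (· + m)

end OCode

open Classical in
/-- The characteristic function of a set of naturals, as a `{0,1}`-valued function. -/
noncomputable def chi (A : Set ℕ) : ℕ → ℕ := fun n => if n ∈ A then 1 else 0

/-- The characteristic function of `A`, as a (total) partial function, used as an oracle. -/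
noncomputable def charFun (A : Set ℕ) : ℕ →. ℕ := fun n => Part.some (chi A n)

/-- `A` is Turing reducible to `B`: some oracle machine with oracle (the characteristic
function of) `B` computes the characteristic function of `A`. -/
def TuringRed (A B : Set ℕ) : Prop :=
  ∃ c : OCode, ∀ n, OCode.eval (charFun B) c n = Part.some (chi A n)

/-- The Turing jump of `A` : the halting problem relative to `A`. -/
def jump (A : Set ℕ) : Set ℕ :=
  {e | (OCode.eval (charFun A) (OCode.ofNat e) e).Dom}

/-- The halting set `K = {e : Mₑ(e) halts}`. -/
def Kset : Set ℕ := {e | ((Denumerable.ofNat Nat.Partrec.Code e).eval e).Dom}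

/-- The `e`-th computably enumerable set `Wₑ`, the domain of the `e`-th machine. -/
def Wenum (e : ℕ) : Set ℕ := {x | ((Denumerable.ofNat Nat.Partrec.Code e).eval x).Dom}

/-- A set of naturals is computably enumerable. -/
def CEset (A : Set ℕ) : Prop := ∃ c : Nat.Partrec.Code, A = {x | (c.eval x).Dom}

open Classical in
/-- The list of oracle answers of `B` to a list of queries. -/
noncomputable def answers (B : Set ℕ) (qs : List ℕ) : List Bool :=
  qs.map fun q => decide (q ∈ B)

/-- Truth-table reducibility: a total computable reduction, given by a computable function
producing the queries and a total computable function evaluating the truth table on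
the vector of oracle answers. -/
def TTRed (A B : Set ℕ) : Prop :=
  ∃ f : ℕ → List ℕ, ∃ g : ℕ → List Bool → Bool,
    Computable f ∧ Computable₂ g ∧ ∀ x, x ∈ A ↔ g x (answers B (f x)) = true

/-- Bounded truth-table reducibility: truth-table reducibility with a constant bound
on the number of queries. -/
def BTTRed (A B : Set ℕ) : Prop :=
  ∃ f : ℕ → List ℕ, ∃ g : ℕ → List Bool → Bool, ∃ k : ℕ,
    Computable f ∧ Computable₂ g ∧ (∀ x, (f x).length ≤ k) ∧
    ∀ x, x ∈ A ↔ g x (answers B (f x)) = true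

/-- A set is immune if it is infinite but has no infinite c.e. subset. -/
def Immune (C : Set ℕ) : Prop :=
  C.Infinite ∧ ∀ W : Set ℕ, CEset W → W ⊆ C → W.Finite

/-- A set is bi-immune if both it and its complement are immune. -/
def BiImmune (C : Set ℕ) : Prop := Immune C ∧ Immune Cᶜ

/-- The principal function of `B`: `pfun B x` is the `x`-th element of `B` in increasing order. -/
noncomputable def pfun (B : Set ℕ) : ℕ → ℕ := Nat.nth (· ∈ B)

/-- A set is hyperimmune if it is infinite and its principal function is not majorized
by any computable function. -/
def Hyperimmune (B : Set ℕ) : Prop :=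
  B.Infinite ∧ ∀ g : ℕ → ℕ, Computable g → ¬ ∀ x, pfun B x < g x

/-- `D` is weakly `n`-c.e.: some computable approximation `h` converges to the
characteristic function of `D` with at most `n` mind changes on each argument. -/
def WeaklyNCE (n : ℕ) (D : Set ℕ) : Prop :=
  ∃ h : ℕ → ℕ → ℕ, Computable₂ h ∧ ∀ x,
    (∀ᶠ s in Filter.atTop, h x s = chi D x) ∧
    {s | h x s ≠ h x (s + 1)}.Finite ∧ {s | h x s ≠ h x (s + 1)}.ncard ≤ n

/-- `f` is in `EN m`: there are `m` partial computable functions such that on every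
input at least one of them converges to the correct value of `f`. -/
def EN {α β : Type} [Primcodable α] [Primcodable β] (m : ℕ) (f : α → β) : Prop :=
  ∃ F : Fin m → α →. β, (∀ i, Partrec (F i)) ∧ ∀ x, ∃ i, f x ∈ F i x

/-- The counting function `#ₙ^A`: the number of distinct elements among the inputs
that belong to `A`. -/
noncomputable def cardFn (A : Set ℕ) (n : ℕ) (v : List.Vector ℕ n) : ℕ :=
  ({x | x ∈ v.toList} ∩ A).ncard

open Classical in
/-- The `n`-fold characteristic function `χₙ^A`. -/
noncomputable def chiVec (A : Set ℕ) (n : ℕ) (v : List.Vector ℕ n) : List.Vector Bool n :=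
  v.map fun x => decide (x ∈ A)


/-- Stage-`s` approximation to membership of `q` in `Kset`. -/
def Kapprox (q s : ℕ) : Bool :=
  (Nat.Partrec.Code.evaln s (Denumerable.ofNat Nat.Partrec.Code q) q).isSome

theorem Kapprox_primrec : Primrec₂ Kapprox := by
  have h := Nat.Partrec.Code.primrec_evaln
  exact (Primrec.option_isSome.comp
    (h.comp (((Primrec.snd).pair ((Primrec.ofNat _).comp Primrec.fst)).pair Primrec.fst))).to₂

theorem Kapprox_monotone (q : ℕ) : Monotone fun s => Kapprox q s := by
  intro s t hst
  simp only [Kapprox]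
  cases hs : (Nat.Partrec.Code.evaln s (Denumerable.ofNat Nat.Partrec.Code q) q) with
  | none => simp
  | some a =>
    have := Nat.Partrec.Code.evaln_mono hst hs
    rw [Option.mem_def] at this
    simp [this]

theorem Kapprox_mem (q : ℕ) (hq : q ∈ Kset) : ∀ᶠ s in Filter.atTop, Kapprox q s = true := by
  obtain ⟨a, ha⟩ := Part.dom_iff_mem.1 hq
  obtain ⟨s0, hs0⟩ := Nat.Partrec.Code.evaln_complete.1 ha
  refine Filter.eventually_atTop.2 ⟨s0, fun s hs => ?_⟩
  have := Nat.Partrec.Code.evaln_mono hs hs0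
  rw [Option.mem_def] at this
  simp [Kapprox, this]

theorem Kapprox_not_mem (q : ℕ) (hq : q ∉ Kset) (s : ℕ) : Kapprox q s = false := by
  simp only [Kapprox]
  cases hs : (Nat.Partrec.Code.evaln s (Denumerable.ofNat Nat.Partrec.Code q) q) with
  | none => simp
  | some a =>
    exact absurd (Part.dom_iff_mem.2 ⟨a, Nat.Partrec.Code.evaln_complete.2 ⟨s, hs⟩⟩) hq

theorem Kapprox_limit (l : List ℕ) :
    ∀ᶠ s in Filter.atTop, l.map (fun q => Kapprox q s) = answers Kset l := by
  induction l with
  | nil => simp [answers]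
  | cons q l ih =>
    classical
    by_cases h : q ∈ Kset
    · filter_upwards [Kapprox_mem q h, ih] with s h1 h2
      simp only [answers, List.map_cons] at h2 ⊢
      rw [h1, h2, decide_eq_true h]
    · filter_upwards [ih] with s h2
      simp only [answers, List.map_cons] at h2 ⊢
      rw [Kapprox_not_mem q h, h2, decide_eq_false h]

theorem monotone_bool_changes (b : ℕ → Bool) (hb : Monotone b) :
    {s | b s ≠ b (s + 1)}.Subsingleton := by
  have key : ∀ s ∈ {s | b s ≠ b (s + 1)}, b s = false ∧ b (s + 1) = true := by
    intro s hs
    cases h1 : b s <;> cases h2 : b (s + 1)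
    · exact absurd (h1.trans h2.symm) hs
    · exact ⟨rfl, rfl⟩
    · have := hb (Nat.le_succ s); rw [h1, h2] at this; exact absurd this (by decide)
    · exact absurd (h1.trans h2.symm) hs
  intro s hs t ht
  by_contra hne
  rcases Nat.lt_or_ge s t with h | h
  · have h1 := (key s hs).2
    have h2 := (key t ht).1
    have := hb (Nat.succ_le_of_lt h); rw [h1, h2] at this; exact absurd this (by decide)
  · have hlt := lt_of_le_of_ne h fun e => hne e.symm
    have h1 := (key t ht).2
    have h2 := (key s hs).1
    have := hb (Nat.succ_le_of_lt hlt); rw [h1, h2] at this; exact absurd this (by decide)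

theorem list_changes (l : List ℕ) :
    {s | l.map (fun q => Kapprox q s) ≠ l.map (fun q => Kapprox q (s + 1))}.Finite ∧
    {s | l.map (fun q => Kapprox q s) ≠ l.map (fun q => Kapprox q (s + 1))}.ncard ≤ l.length := by
  induction l with
  | nil => simp
  | cons q l ih =>
    have hsub : {s | (q :: l).map (fun q => Kapprox q s) ≠ (q :: l).map (fun q => Kapprox q (s + 1))}
        ⊆ {s | Kapprox q s ≠ Kapprox q (s + 1)} ∪
          {s | l.map (fun q => Kapprox q s) ≠ l.map (fun q => Kapprox q (s + 1))} := by
      intro s hs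
      by_contra h
      simp only [Set.mem_union, Set.mem_setOf_eq, not_or, not_not] at h
      exact hs (by simp [h.1, h.2])
    have h1 := monotone_bool_changes _ (Kapprox_monotone q)
    have hfin : ({s | Kapprox q s ≠ Kapprox q (s + 1)} ∪
        {s | l.map (fun q => Kapprox q s) ≠ l.map (fun q => Kapprox q (s + 1))}).Finite :=
      h1.finite.union ih.1
    refine ⟨hfin.subset hsub, ?_⟩
    calc _ ≤ _ := Set.ncard_le_ncard hsub hfin
    _ ≤ {s | Kapprox q s ≠ Kapprox q (s + 1)}.ncard +
          {s | l.map (fun q => Kapprox q s) ≠ l.map (fun q => Kapprox q (s + 1))}.ncard :=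
        Set.ncard_union_le _ _
    _ ≤ 1 + l.length :=
        Nat.add_le_add ((Set.ncard_le_one h1.finite).2 fun a ha b hb => h1 ha hb) ih.2
    _ = (q :: l).length := by simp [Nat.add_comm]

/-- If `D ≤_btt K` then `D` is weakly `n`-c.e. for some `n`. -/
theorem weaklyNCE_of_btt_K (D : Set ℕ) (hD : BTTRed D Kset) :
    ∃ n : ℕ, WeaklyNCE n D := by
  obtain ⟨f, g, k, hf, hg, hlen, hcorr⟩ := hD
  refine ⟨k, fun x s => cond (g x ((f x).map fun q => Kapprox q s)) 1 0, ?_, fun x => ?_⟩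
  · have hp : Primrec fun p : List ℕ × ℕ => p.1.map fun q => Kapprox q p.2 :=
      Primrec.list_map Primrec.fst
        (Kapprox_primrec.comp Primrec.snd (Primrec.snd.comp Primrec.fst)).to₂
    have hmap : Computable₂ fun (x s : ℕ) => (f x).map fun q => Kapprox q s :=
      (hp.to_comp.comp ((hf.comp Computable.fst).pair Computable.snd)).to₂
    exact (Computable.cond (hg.comp Computable.fst hmap)
      (Computable.const 1) (Computable.const 0)).to₂
  · constructor
    · filter_upwards [Kapprox_limit (f x)] with s hs
      rw [hs, chi]
      by_cases hx : x ∈ D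
      · simp [hx, (hcorr x).1 hx]
      · have hgx : g x (answers Kset (f x)) = false := by
          cases h : g x (answers Kset (f x))
          · rfl
          · exact absurd ((hcorr x).2 h) hx
        simp [hx, hgx]
    · have hsub : {s | (fun s => cond (g x ((f x).map fun q => Kapprox q s)) 1 0) s ≠
            (fun s => cond (g x ((f x).map fun q => Kapprox q s)) 1 0) (s + 1)} ⊆
          {s | (f x).map (fun q => Kapprox q s) ≠ (f x).map (fun q => Kapprox q (s + 1))} := by
        intro s hs
        by_contra h
        simp only [Set.mem_setOf_eq, not_not] at h
        exact hs (by simp only [h])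
      obtain ⟨hfin, hcard⟩ := list_changes (f x)
      exact ⟨hfin.subset hsub, le_trans (le_trans (Set.ncard_le_ncard hsub hfin) hcard) (hlen x)⟩
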